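/- Let R be a commutative Noetherian local ring with maximal ideal m of prime characteristic p, and suppose E := E_R(R/m) admits a structure of x-torsion-free left R[x,f]-module (an injective additive map θ : E → E with θ(re) = r^p θ(e)). Then R is F-pure: for every R-module N, the map N → (f_*R) ⊗_R N, n ↦ 1 ⊗ n, is injective. -/

import Mathlib

open TensorProduct

/-- `R` viewed as a (right) `R`-module via the Frobenius `f : r ↦ r^p`, i.e. `f_* R`:
the underlying additive group is `R`, and `r • a = r^p * a`. -/
def FrobRestrict (R : Type*) [CommRing R] (p : ℕ) [Fact p.Prime] [CharP R p] : Type _ := R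

instance (R : Type*) [CommRing R] (p : ℕ) [Fact p.Prime] [CharP R p] :
    AddCommGroup (FrobRestrict R p) := inferInstanceAs (AddCommGroup R)

instance (R : Type*) [CommRing R] (p : ℕ) [Fact p.Prime] [CharP R p] :
    Module R (FrobRestrict R p) := Module.compHom R (frobenius R p)

noncomputable instance (R : Type*) [CommRing R] (p : ℕ) [Fact p.Prime] [CharP R p] :
    One (FrobRestrict R p) := inferInstanceAs (One R)

universe u v w

section Aux

variable {R : Type u} [CommRing R]

/-- Cogenerator step: a linear map from the span of a nonzero element to `E`,
sending the element to `e₀`, provided `e₀` is killed by the maximal ideal. -/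
theorem aux_cogen [IsLocalRing R] {E : Type v} [AddCommGroup E] [Module R E]
    (e₀ : E) (he₀ : ∀ r ∈ IsLocalRing.maximalIdeal R, r • e₀ = 0)
    {N : Type w} [AddCommGroup N] [Module R N] (x : N) (hx : x ≠ 0) :
    ∃ f : (Submodule.span R {x} : Submodule R N) →ₗ[R] E,
      f ⟨x, Submodule.mem_span_singleton_self x⟩ = e₀ := by
  set T := LinearMap.toSpanSingleton R N x with hT
  have hker : LinearMap.ker T ≤ LinearMap.ker (LinearMap.toSpanSingleton R E e₀) := by
    intro r hr
    rw [LinearMap.mem_ker] at hr ⊢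
    have hrx : r • x = 0 := hr
    have hrm : r ∈ IsLocalRing.maximalIdeal R := by
      by_contra hru
      have : IsUnit r := by
        simpa [IsLocalRing.mem_maximalIdeal, mem_nonunits_iff, not_not] using hru
      obtain ⟨u, rfl⟩ := this
      apply hx
      have := congrArg (fun y => (↑u⁻¹ : R) • y) hrx
      simpa [smul_smul] using this
    simpa using he₀ r hrm
  have heq : Submodule.span R {x} = LinearMap.range T :=
    LinearMap.span_singleton_eq_range R N x
  refine ⟨(Submodule.liftQ _ (LinearMap.toSpanSingleton R E e₀) hker) ∘ₗ
      (T.quotKerEquivRange.symm : _ →ₗ[R] _) ∘ₗ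
      (LinearEquiv.ofEq _ _ heq : _ ≃ₗ[R] _).toLinearMap, ?_⟩
  have h1 : (LinearEquiv.ofEq _ _ heq) (⟨x, Submodule.mem_span_singleton_self x⟩ :
      Submodule.span R {x}) = ⟨x, heq ▸ Submodule.mem_span_singleton_self x⟩ := rfl
  have h2 : T.quotKerEquivRange (Submodule.Quotient.mk (1 : R)) =
      ⟨x, heq ▸ Submodule.mem_span_singleton_self x⟩ := by
    ext
    rw [LinearMap.quotKerEquivRange_apply_mk]
    simp [hT, LinearMap.toSpanSingleton_apply]
  have h3 : T.quotKerEquivRange.symm ⟨x, heq ▸ Submodule.mem_span_singleton_self x⟩ =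
      Submodule.Quotient.mk (1 : R) := by
    rw [LinearEquiv.symm_apply_eq, h2]
  simp only [LinearMap.comp_apply, LinearEquiv.coe_coe, h1, h3]
  show ((LinearMap.ker T).liftQ (LinearMap.toSpanSingleton R E e₀) hker)
      (Submodule.Quotient.mk (1 : R)) = e₀
  rw [Submodule.liftQ_apply]
  simp [LinearMap.toSpanSingleton_apply]

/-- Smallness of `R ⧸ m^n` from smallness of `R ⧸ m`, for a Noetherian ring. -/
theorem aux_small [IsNoetherianRing R] (m : Ideal R) (hsm : Small.{v} (R ⧸ m)) :
    ∀ n : ℕ, Small.{v} (R ⧸ (m ^ n : Ideal R)) := by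
  intro n
  induction n with
  | zero =>
      have : Subsingleton (R ⧸ (m ^ 0 : Ideal R)) := by
        rw [pow_zero, Ideal.one_eq_top]
        exact Submodule.Quotient.subsingleton_iff.mpr rfl
      exact small_of_injective (f := fun _ => PUnit.unit.{v+1}) fun a b _ => Subsingleton.elim a b
  | succ n ih =>
      -- generators of m ^ n
      obtain ⟨d, g, hg⟩ := Submodule.fg_iff_exists_fin_generating_family.mp
        (IsNoetherian.noetherian (m ^ n : Ideal R))
      have hle : (m ^ (n + 1) : Ideal R) ≤ Submodule.comap (LinearMap.id) (m ^ n : Ideal R) := by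
        simpa using Ideal.pow_le_pow_right (Nat.le_succ n)
      set π : R ⧸ (m ^ (n + 1) : Ideal R) →ₗ[R] R ⧸ (m ^ n : Ideal R) :=
        Submodule.mapQ _ _ LinearMap.id hle with hπdef
      have hπsurj : Function.Surjective π := by
        intro z
        obtain ⟨y, rfl⟩ := Submodule.Quotient.mk_surjective _ z
        refine ⟨Submodule.Quotient.mk y, ?_⟩
        rw [hπdef, Submodule.mapQ_apply]
        rfl
      set σ := Function.surjInv hπsurj with hσdef
      have hσ : ∀ z, π (σ z) = z := Function.surjInv_eq hπsurj
      have hmk : Function.Surjective (Submodule.Quotient.mk (p := m) : R → R ⧸ m) :=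
        Submodule.Quotient.mk_surjective _
      set τ := Function.surjInv hmk with hτdef
      have hτ : ∀ c, (Submodule.Quotient.mk (τ c) : R ⧸ m) = c := Function.surjInv_eq hmk
      have : Small.{v} ((R ⧸ (m ^ n : Ideal R)) × (Fin d → R ⧸ m)) := by
        haveI := ih
        haveI := hsm
        infer_instance
      refine small_of_surjective (f := fun zc : (R ⧸ (m ^ n : Ideal R)) × (Fin d → R ⧸ m) =>
        σ zc.1 + (Submodule.Quotient.mk (∑ i, τ (zc.2 i) * g i) : R ⧸ (m ^ (n+1) : Ideal R))) ?_
      intro z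
      obtain ⟨y, hy⟩ : ∃ y : R, (Submodule.Quotient.mk y : R ⧸ (m ^ (n+1) : Ideal R))
          = z - σ (π z) := Submodule.Quotient.mk_surjective _ _
      have hy0 : y ∈ (m ^ n : Ideal R) := by
        have : π (z - σ (π z)) = 0 := by rw [map_sub, hσ, sub_self]
        rw [← hy] at this
        have : (Submodule.Quotient.mk y : R ⧸ (m ^ n : Ideal R)) = 0 := by
          simpa [hπdef, Submodule.mapQ_apply] using this
        simpa [Ideal.Quotient.eq_zero_iff_mem] using this
      rw [← hg] at hy0
      obtain ⟨c, hc⟩ := (Submodule.mem_span_range_iff_exists_fun R).mp hy0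
      refine ⟨⟨π z, fun i => Submodule.Quotient.mk (c i)⟩, ?_⟩
      have hmkeq : (Submodule.Quotient.mk (∑ i, τ (Submodule.Quotient.mk (c i)) * g i) :
          R ⧸ (m ^ (n+1) : Ideal R)) = Submodule.Quotient.mk y := by
        rw [Submodule.Quotient.eq]
        have : (∑ i, τ (Submodule.Quotient.mk (c i)) * g i) - y
            = ∑ i, (τ (Submodule.Quotient.mk (c i)) - c i) * g i := by
          rw [← hc]
          rw [← Finset.sum_sub_distrib]
          congr 1
          ext i
          rw [sub_mul, smul_eq_mul]
        rw [this]
        apply Submodule.sum_mem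
        intro i _
        have h1 : τ (Submodule.Quotient.mk (c i)) - c i ∈ m := by
          rw [← Submodule.Quotient.eq]
          exact hτ _
        have h2 : g i ∈ (m ^ n : Ideal R) := by
          rw [← hg]
          exact Submodule.subset_span (Set.mem_range_self i)
        have := Ideal.mul_mem_mul h1 h2
        rwa [← pow_succ'] at this
      dsimp only
      rw [hmkeq, hy]
      ring


theorem aux_main (R : Type u) [CommRing R] [IsNoetherianRing R] [IsLocalRing R]
    (p : ℕ) [Fact p.Prime] [CharP R p]
    {E : Type v} [AddCommGroup E] [Module R E]
    (hinj : Module.Injective R E)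
    (S : Submodule R E) (hS : Nonempty (S ≃ₗ[R] IsLocalRing.ResidueField R))
    (θ : E →+ E) (hθ : ∀ (r : R) (e : E), θ (r • e) = r ^ p • θ e)
    (htf : Function.Injective θ) :
    ∀ (N : Type w) [AddCommGroup N] [Module R N],
      Function.Injective (fun n : N => (1 : FrobRestrict R p) ⊗ₜ[R] n) := by
  classical
  obtain ⟨σ⟩ := hS
  set e₀ : E := ((σ.symm 1 : S) : E) with he₀def
  have he₀m : ∀ r ∈ IsLocalRing.maximalIdeal R, r • e₀ = 0 := by
    intro r hr
    have h1 : r • (1 : IsLocalRing.ResidueField R) = 0 := by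
      show r • (Submodule.Quotient.mk (1 : R) :
        R ⧸ (IsLocalRing.maximalIdeal R : Ideal R)) = 0
      rw [← Submodule.Quotient.mk_smul, Submodule.Quotient.mk_eq_zero]
      simpa [smul_eq_mul] using hr
    calc r • e₀ = ((r • σ.symm 1 : S) : E) := rfl
      _ = ((σ.symm (r • 1) : S) : E) := by rw [map_smul]
      _ = 0 := by rw [h1, map_zero]; rfl
  have he₀0 : e₀ ≠ 0 := by
    intro h
    have h1 : (σ.symm 1 : S) = 0 := by
      exact ZeroMemClass.coe_eq_zero.mp h
    have h2 : (1 : IsLocalRing.ResidueField R) = 0 := by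
      have := congrArg σ h1
      simpa using this
    exact one_ne_zero h2
  -- faithfulness of E
  have hfaith : ∀ a : R, a ≠ 0 → ∃ e : E, a • e ≠ 0 := by
    intro a ha
    have hmne : (IsLocalRing.maximalIdeal R) ≠ ⊤ :=
      Ideal.IsMaximal.ne_top (IsLocalRing.maximalIdeal.isMaximal R)
    have hK := Ideal.iInf_pow_eq_bot_of_isLocalRing (I := IsLocalRing.maximalIdeal R) hmne
    obtain ⟨n, hn⟩ : ∃ n : ℕ, a ∉ (IsLocalRing.maximalIdeal R) ^ n := by
      by_contra hc
      push_neg at hc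
      have : a ∈ ⨅ i : ℕ, (IsLocalRing.maximalIdeal R) ^ i :=
        (Submodule.mem_iInf _).mpr hc
      rw [hK] at this
      exact ha (by simpa using this)
    haveI hsmRF : Small.{v} (R ⧸ (IsLocalRing.maximalIdeal R : Ideal R)) := by
      refine small_of_injective
        (f := fun z : IsLocalRing.ResidueField R => ((σ.symm z : S) : E)) ?_
      intro x y hxy
      have := Subtype.coe_injective hxy
      exact σ.symm.injective this
    haveI := aux_small (R := R) (IsLocalRing.maximalIdeal R) hsmRF n
    let eqv : Shrink.{v} (R ⧸ ((IsLocalRing.maximalIdeal R : Ideal R) ^ n)) ≃ₗ[R]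
        (R ⧸ ((IsLocalRing.maximalIdeal R : Ideal R) ^ n)) :=
      Shrink.linearEquiv R _
    set q := eqv.symm (Submodule.Quotient.mk a) with hq
    have hq0 : q ≠ 0 := by
      rw [hq, ne_eq, LinearEquiv.map_eq_zero_iff, Submodule.Quotient.mk_eq_zero]
      exact hn
    obtain ⟨f, hf⟩ := aux_cogen e₀ he₀m q hq0
    obtain ⟨h, hh⟩ := hinj.out (Submodule.span R {q}).subtype (Submodule.injective_subtype _) f
    refine ⟨h (eqv.symm (Submodule.Quotient.mk 1)), ?_⟩
    have h1 : a • (eqv.symm (Submodule.Quotient.mk (1:R))) = q := by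
      rw [hq, ← map_smul, ← Submodule.Quotient.mk_smul]
      simp [smul_eq_mul]
    rw [← map_smul, h1]
    have h2 : h q = e₀ := by
      have := hh ⟨q, Submodule.mem_span_singleton_self q⟩
      simpa [hf] using this
    rw [h2]
    exact he₀0
  haveI hsmallR : Small.{v} R := by
    refine small_of_injective (f := fun r : R => (fun e : E => r • e)) ?_
    intro r r' hrr
    by_contra hne
    obtain ⟨e, he⟩ := hfaith (r - r') (sub_ne_zero.mpr hne)
    apply he
    rw [sub_smul, show r • e = r' • e from congrFun hrr e, sub_self]
  have hbaer : Module.Baer R E := Module.Baer.of_injective hinj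
  intro N _ _
  have key : ∀ z : N, (1 : FrobRestrict R p) ⊗ₜ[R] z = 0 → z = 0 := by
    intro z hz
    by_contra hz0
    obtain ⟨f, hf⟩ := aux_cogen e₀ he₀m z hz0
    obtain ⟨φ, hφ⟩ := hbaer.extension_property (Submodule.span R {z}).subtype
      (Submodule.injective_subtype _) f
    have hφz : φ z = e₀ := by
      have := LinearMap.congr_fun hφ ⟨z, Submodule.mem_span_singleton_self z⟩
      simpa [hf] using this
    let Θ : FrobRestrict R p →+ E →+ E :=
      AddMonoidHom.mk' (fun r => AddMonoidHom.mk'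
          (fun e => (show R from r) • θ e) (fun e e' => by
            show (show R from r) • θ (e + e') = (show R from r) • θ e + (show R from r) • θ e'
            rw [map_add, smul_add]))
        (fun r r' => AddMonoidHom.ext fun e =>
          add_smul (show R from r) (show R from r') (θ e))
    have hbal : ∀ (s : R) (r : FrobRestrict R p) (e : E), Θ (s • r) e = Θ r (s • e) := by
      intro s r e
      show (frobenius R p s * (show R from r)) • θ e = (show R from r) • θ (s • e)
      rw [hθ, frobenius_def, mul_smul]
      exact smul_comm _ _ _
    have h2 : (1 : FrobRestrict R p) ⊗ₜ[R] (φ z) = (0 : FrobRestrict R p ⊗[R] E) := by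
      have := congrArg (LinearMap.lTensor (FrobRestrict R p) φ) hz
      simpa using this
    have h3 : θ (φ z) = 0 := by
      have h4 := congrArg (TensorProduct.liftAddHom Θ hbal) h2
      rw [map_zero, TensorProduct.liftAddHom_tmul] at h4
      calc θ (φ z) = (1 : R) • θ (φ z) := (one_smul R _).symm
        _ = Θ (1 : FrobRestrict R p) (φ z) := rfl
        _ = 0 := h4
    have h5 : φ z = 0 := htf (by rw [h3, map_zero])
    rw [hφz] at h5
    exact he₀0 h5
  intro a b hab
  have hab' : (1 : FrobRestrict R p) ⊗ₜ[R] (a - b) = 0 := by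
    rw [tmul_sub, sub_eq_zero]
    exact hab
  exact sub_eq_zero.mp (key _ hab')

/-- Let `(R,m)` be a Noetherian local ring of prime characteristic `p`, and suppose the
injective envelope `E` of `R/m` (encoded: injective `R`-module with an essential copy
`S` of the residue field) admits an `x`-torsion-free left `R[x,f]`-module structure,
i.e. an injective additive map `θ : E → E` with `θ(r•e) = r^p • θ e`.  Then `R` is
`F`-pure: for every `R`-module `N` the map `N → (f_* R) ⊗_R N`, `n ↦ 1 ⊗ n`, is
injective. -/
theorem stmt10 (R : Type*) [CommRing R] [IsNoetherianRing R] [IsLocalRing R]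
    (p : ℕ) [Fact p.Prime] [CharP R p]
    {E : Type*} [AddCommGroup E] [Module R E]
    (hinj : Module.Injective R E)
    (S : Submodule R E) (hS : Nonempty (S ≃ₗ[R] IsLocalRing.ResidueField R))
    (hess : ∀ N : Submodule R E, N ≠ ⊥ → N ⊓ S ≠ ⊥)
    (θ : E →+ E) (hθ : ∀ (r : R) (e : E), θ (r • e) = r ^ p • θ e)
    (htf : Function.Injective θ) :
    ∀ (N : Type _) [AddCommGroup N] [Module R N],
      Function.Injective (fun n : N => (1 : FrobRestrict R p) ⊗ₜ[R] n) :=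
  aux_main R p hinj S hS θ hθ htf
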